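/- Consider n agents with ideal group sizes s_1 ≤ s_2 ≤ … ≤ s_n, a budget α of exclusions, and a monotone cost function cost : ℕ × ℕ → ℝ that fulfills the quadrangle inequality and the reverse quadrangle inequality. Then among all solutions with at most α exclusions there exists one of minimum utilitarian social cost that is size-monotonic. -/

import Mathlib

open Finset

section AuxLemmas

variable {n : ℕ}

/-- Full quadrangle inequality derived from the hypotheses. -/
private lemma aux_fullquad (cost : ℕ → ℕ → ℝ)
    (hmono : ∀ p a b : ℕ, (p ≤ a ∧ a ≤ b) ∨ (b ≤ a ∧ a ≤ p) → cost p a ≤ cost p b)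
    (hquad : ∀ a b c d : ℕ, a ≤ b → b ≤ c → c ≤ d →
      cost a c + cost b d ≤ cost a d + cost b c)
    (hrquad : ∀ a b c d : ℕ, d ≤ c → c ≤ b → b ≤ a →
      cost a c + cost b d ≤ cost a d + cost b c) :
    ∀ a b c d : ℕ, a ≤ b → c ≤ d → cost a c + cost b d ≤ cost a d + cost b c := by
  intro a b c d hab hcd
  rcases le_total c a with hca | hac
  · rcases le_total d a with hda | had
    · have := hrquad b a d c hcd hda hab
      linarith
    · rcases le_total d b with hdb | hbd
      · have h1 := hrquad b a a c hca le_rfl hab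
        have h2 : cost a a ≤ cost a d := hmono a a d (Or.inl ⟨le_rfl, had⟩)
        have h3 : cost b d ≤ cost b a := hmono b d a (Or.inr ⟨had, hdb⟩)
        linarith
      · have h1 := hrquad b a a c hca le_rfl hab
        have h2 := hquad a b b d hab le_rfl hbd
        have h3 : cost a a ≤ cost a b := hmono a a b (Or.inl ⟨le_rfl, hab⟩)
        have h4 : cost b b ≤ cost b a := hmono b b a (Or.inr ⟨hab, le_rfl⟩)
        linarith
  · rcases le_total d b with hdb | hbd
    · have h1 : cost a c ≤ cost a d := hmono a c d (Or.inl ⟨hac, hcd⟩)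
      have h2 : cost b d ≤ cost b c := hmono b d c (Or.inr ⟨hcd, hdb⟩)
      linarith
    · rcases le_total c b with hcb | hbc
      · have h1 : cost a c ≤ cost a b := hmono a c b (Or.inl ⟨hac, hcb⟩)
        have h2 := hquad a b b d hab le_rfl hbd
        have h3 : cost b b ≤ cost b c := hmono b b c (Or.inr ⟨hcb, le_rfl⟩)
        linarith
      · have := hquad a b c d hab hbc hcd
        linarith

/-- Summing over the parts of a finpartition equals summing over the whole set. -/
private lemma aux_sum_parts {Q : Finset (Fin n)} (σ : Finpartition Q) (F : Fin n → ℝ) :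
    ∑ B ∈ σ.parts, ∑ i ∈ B, F i = ∑ i ∈ Q, F i := by
  conv_rhs => rw [← σ.biUnion_parts]
  rw [Finset.sum_biUnion σ.supIndep.pairwiseDisjoint]
  simp only [id_eq]

/-- If the cards of parts agree with a size function `u`, the utilitarian cost is a plain sum. -/
private lemma aux_cost_sum_eq {Q : Finset (Fin n)} (π : Finpartition Q) (u : Fin n → ℕ)
    (h : ∀ B ∈ π.parts, ∀ i ∈ B, B.card = u i) (F : Fin n → ℕ → ℝ) :
    ∑ B ∈ π.parts, ∑ i ∈ B, F i B.card = ∑ i ∈ Q, F i (u i) := by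
  rw [← aux_sum_parts π (fun i => F i (u i))]
  exact Finset.sum_congr rfl fun B hB =>
    Finset.sum_congr rfl fun i hi => by rw [h B hB i hi]

/-- Rearrangement: values of `t` can be resorted monotonically without increasing total cost. -/
private lemma aux_rearrange (s : Fin n → ℕ) (hs : Monotone s) (cost : ℕ → ℕ → ℝ)
    (hfq : ∀ a b c d : ℕ, a ≤ b → c ≤ d → cost a c + cost b d ≤ cost a d + cost b c) :
    ∀ (N : ℕ) (Q : Finset (Fin n)), Q.card ≤ N → ∀ t : Fin n → ℕ,
    ∃ t' : Fin n → ℕ, (∀ i ∈ Q, ∀ j ∈ Q, i ≤ j → t' i ≤ t' j) ∧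
      Q.val.map t' = Q.val.map t ∧
      ∑ i ∈ Q, cost (s i) (t' i) ≤ ∑ i ∈ Q, cost (s i) (t i) := by
  intro N
  induction N with
  | zero =>
    intro Q hQ t
    have hQe : Q = ∅ := Finset.card_eq_zero.1 (Nat.le_zero.1 hQ)
    subst hQe
    exact ⟨t, by simp, rfl, le_rfl⟩
  | succ N ih =>
    intro Q hQ t
    rcases Q.eq_empty_or_nonempty with rfl | hne
    · exact ⟨t, by simp, rfl, le_rfl⟩
    have hmQ : Q.max' hne ∈ Q := Q.max'_mem hne
    set m := Q.max' hne with hm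
    obtain ⟨j, hjQ, hj⟩ := Q.exists_max_image t hne
    have hjm : j ≤ m := Q.le_max' j hjQ
    set t₁ : Fin n → ℕ := fun i => if i = m then t j else if i = j then t m else t i with ht₁
    have ht₁m : t₁ m = t j := by simp [ht₁]
    have ht₁other : ∀ i, i ≠ m → i ≠ j → t₁ i = t i := by
      intro i h1 h2; simp [ht₁, h1, h2]
    -- swap does not increase the cost
    have hswap : ∑ i ∈ Q, cost (s i) (t₁ i) ≤ ∑ i ∈ Q, cost (s i) (t i) := by
      rcases eq_or_ne j m with rfl | hjne
      · apply le_of_eq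
        apply Finset.sum_congr rfl
        intro i hi
        by_cases h : i = m <;> simp [ht₁, h]
      · have hmem : j ∈ Q.erase m := Finset.mem_erase.2 ⟨hjne, hjQ⟩
        have e1 : ∀ u : Fin n → ℕ, ∑ i ∈ Q, cost (s i) (u i) =
            cost (s m) (u m) + (cost (s j) (u j) +
              ∑ i ∈ (Q.erase m).erase j, cost (s i) (u i)) := by
          intro u
          rw [← Finset.add_sum_erase _ _ hmQ, ← Finset.add_sum_erase _ _ hmem]
        rw [e1 t₁, e1 t]
        have hrest : ∑ i ∈ (Q.erase m).erase j, cost (s i) (t₁ i) =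
            ∑ i ∈ (Q.erase m).erase j, cost (s i) (t i) := by
          apply Finset.sum_congr rfl
          intro i hi
          have h1 : i ≠ j := (Finset.mem_erase.1 hi).1
          have h2 : i ≠ m := (Finset.mem_erase.1 (Finset.mem_erase.1 hi).2).1
          rw [ht₁other i h2 h1]
        have hkey := hfq (s j) (s m) (t m) (t j) (hs hjm) (hj m hmQ)
        have ht₁j : t₁ j = t m := by simp [ht₁, hjne]
        rw [hrest, ht₁m, ht₁j]
        linarith
    -- swap preserves the multiset of values
    have hms : Q.val.map t₁ = Q.val.map t := by
      rcases eq_or_ne j m with rfl | hjne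
      · apply Multiset.map_congr rfl
        intro i _
        by_cases h : i = m <;> simp [ht₁, h]
      · have hmem : j ∈ Q.erase m := Finset.mem_erase.2 ⟨hjne, hjQ⟩
        have hv1 : Q.val = m ::ₘ (Q.erase m).val := by
          rw [Finset.erase_val, Multiset.cons_erase (by exact_mod_cast hmQ)]
        have hv2 : (Q.erase m).val = j ::ₘ ((Q.erase m).erase j).val := by
          rw [Finset.erase_val ((Q.erase m)), Multiset.cons_erase (by exact_mod_cast hmem)]
        have hrest : ((Q.erase m).erase j).val.map t₁ = ((Q.erase m).erase j).val.map t := by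
          apply Multiset.map_congr rfl
          intro i hi
          have hi' : i ∈ (Q.erase m).erase j := hi
          have h1 : i ≠ j := (Finset.mem_erase.1 hi').1
          have h2 : i ≠ m := (Finset.mem_erase.1 (Finset.mem_erase.1 hi').2).1
          rw [ht₁other i h2 h1]
        have ht₁j : t₁ j = t m := by simp [ht₁, hjne]
        rw [hv1, hv2]
        simp only [Multiset.map_cons, ht₁m, ht₁j, hrest]
        rw [Multiset.cons_swap]
    -- apply IH to Q.erase m with t₁
    have hcard : (Q.erase m).card ≤ N := by
      have h1 : (Q.erase m).card = Q.card - 1 := Finset.card_erase_of_mem hmQ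
      have h2 : 1 ≤ Q.card := Finset.card_pos.2 hne
      omega
    obtain ⟨t'', hmono'', hms'', hsum''⟩ := ih (Q.erase m) hcard t₁
    refine ⟨Function.update t'' m (t j), ?_, ?_, ?_⟩
    · -- monotone on Q
      have hub : ∀ i ∈ Q.erase m, t'' i ≤ t j := by
        intro i hi
        have hmem : t'' i ∈ (Q.erase m).val.map t'' :=
          Multiset.mem_map_of_mem t'' (by exact_mod_cast hi)
        rw [hms''] at hmem
        obtain ⟨i₀, hi₀, hval⟩ := Multiset.mem_map.1 hmem
        have hi₀' : i₀ ∈ Q.erase m := hi₀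
        have h2 : i₀ ≠ m := (Finset.mem_erase.1 hi₀').1
        rw [← hval]
        by_cases h : i₀ = j
        · subst h
          simp only [ht₁, if_neg h2, if_pos rfl]
          exact hj m hmQ
        · rw [ht₁other i₀ h2 h]
          exact hj i₀ (Finset.mem_of_mem_erase hi₀')
      intro i hi k hk hik
      by_cases hkm : k = m
      · subst hkm
        by_cases him : i = m
        · subst him; exact le_rfl
        · rw [Function.update_self, Function.update_of_ne him]
          exact hub i (Finset.mem_erase.2 ⟨him, hi⟩)
      · have him : i ≠ m := by
          intro h; subst h
          exact hkm (le_antisymm (Q.le_max' k hk) hik)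
        rw [Function.update_of_ne him, Function.update_of_ne hkm]
        exact hmono'' i (Finset.mem_erase.2 ⟨him, hi⟩) k (Finset.mem_erase.2 ⟨hkm, hk⟩) hik
    · -- multiset equality
      have hv1 : Q.val = m ::ₘ (Q.erase m).val := by
        rw [Finset.erase_val, Multiset.cons_erase (by exact_mod_cast hmQ)]
      have hrest : (Q.erase m).val.map (Function.update t'' m (t j)) =
          (Q.erase m).val.map t'' := by
        apply Multiset.map_congr rfl
        intro i hi
        have h2 : i ≠ m := (Finset.mem_erase.1 (show i ∈ Q.erase m from hi)).1
        rw [Function.update_of_ne h2]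
      have hrest₁ : (Q.erase m).val.map t₁ = (Q.erase m).val.map t₁ := rfl
      calc Q.val.map (Function.update t'' m (t j))
          = t j ::ₘ (Q.erase m).val.map t'' := by
            rw [hv1, Multiset.map_cons, Function.update_self, hrest]
        _ = t j ::ₘ (Q.erase m).val.map t₁ := by rw [hms'']
        _ = Q.val.map t₁ := by rw [hv1, Multiset.map_cons, ht₁m]
        _ = Q.val.map t := hms
    · -- cost inequality
      have e1 : ∀ u : Fin n → ℕ, ∑ i ∈ Q, cost (s i) (u i) =
          cost (s m) (u m) + ∑ i ∈ Q.erase m, cost (s i) (u i) := by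
        intro u
        rw [← Finset.add_sum_erase _ _ hmQ]
      have hrest : ∑ i ∈ Q.erase m, cost (s i) (Function.update t'' m (t j) i) =
          ∑ i ∈ Q.erase m, cost (s i) (t'' i) := by
        apply Finset.sum_congr rfl
        intro i hi
        rw [Function.update_of_ne (Finset.mem_erase.1 hi).1]
      calc ∑ i ∈ Q, cost (s i) (Function.update t'' m (t j) i)
          = cost (s m) (t j) + ∑ i ∈ Q.erase m, cost (s i) (t'' i) := by
            rw [e1, Function.update_self, hrest]
        _ ≤ cost (s m) (t j) + ∑ i ∈ Q.erase m, cost (s i) (t₁ i) := by linarith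
        _ = ∑ i ∈ Q, cost (s i) (t₁ i) := by rw [e1 t₁, ht₁m]
        _ ≤ ∑ i ∈ Q, cost (s i) (t i) := hswap

/-- Chunking: a monotone size function with valid multiplicities is realized by a finpartition. -/
private lemma aux_chunk :
    ∀ (N : ℕ) (Q : Finset (Fin n)), Q.card ≤ N → ∀ t' : Fin n → ℕ,
    (∀ i ∈ Q, ∀ j ∈ Q, i ≤ j → t' i ≤ t' j) →
    (∀ v : ℕ, v ∣ (Q.filter (fun i => t' i = v)).card) →
    ∃ π : Finpartition Q, ∀ B ∈ π.parts, ∀ i ∈ B, B.card = t' i := by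
  intro N
  induction N with
  | zero =>
    intro Q hQ t' _ _
    have hQe : Q = ∅ := Finset.card_eq_zero.1 (Nat.le_zero.1 hQ)
    subst hQe
    exact ⟨(Finpartition.empty _).copy Finset.bot_eq_empty, by
      intro B hB
      simp [Finpartition.copy, Finpartition.empty] at hB⟩
  | succ N ih =>
    intro Q hQ t' hmono hdiv
    rcases Q.eq_empty_or_nonempty with rfl | hne
    · exact ⟨(Finpartition.empty _).copy Finset.bot_eq_empty, by
        intro B hB
        simp [Finpartition.copy, Finpartition.empty] at hB⟩
    set i₀ := Q.min' hne with hi₀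
    have hi₀Q : i₀ ∈ Q := Q.min'_mem hne
    set c := t' i₀ with hc
    have hc_le : ∀ j ∈ Q, c ≤ t' j := fun j hj => hmono i₀ hi₀Q j hj (Q.min'_le j hj)
    have hfilter_pos : 0 < (Q.filter (fun i => t' i = c)).card :=
      Finset.card_pos.2 ⟨i₀, Finset.mem_filter.2 ⟨hi₀Q, rfl⟩⟩
    have hcpos : 0 < c := by
      rcases Nat.eq_zero_or_pos c with h | h
      · exfalso
        have hz : t' i₀ = 0 := hc ▸ h
        have h0 : 0 < (Q.filter (fun i => t' i = 0)).card :=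
          Finset.card_pos.2 ⟨i₀, Finset.mem_filter.2 ⟨hi₀Q, hz⟩⟩
        have := hdiv 0
        rw [zero_dvd_iff] at this
        omega
      · exact h
    have hcard_ge : c ≤ (Q.filter (fun i => t' i = c)).card :=
      Nat.le_of_dvd hfilter_pos (hdiv c)
    obtain ⟨T, hTsub, hTcard⟩ := Finset.exists_subset_card_eq hcard_ge
    have hTQ : T ⊆ Q := hTsub.trans (Finset.filter_subset _ _)
    have hTval : ∀ i ∈ T, t' i = c := fun i hi => (Finset.mem_filter.1 (hTsub hi)).2
    have hcard' : (Q \ T).card ≤ N := by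
      rw [Finset.card_sdiff_of_subset hTQ, hTcard]
      omega
    have hmono' : ∀ i ∈ Q \ T, ∀ j ∈ Q \ T, i ≤ j → t' i ≤ t' j := by
      intro i hi j hj hij
      exact hmono i (Finset.mem_sdiff.1 hi).1 j (Finset.mem_sdiff.1 hj).1 hij
    have hdiv' : ∀ v : ℕ, v ∣ ((Q \ T).filter (fun i => t' i = v)).card := by
      intro v
      by_cases hvc : v = c
      · have hset : (Q \ T).filter (fun i => t' i = v) = (Q.filter (fun i => t' i = v)) \ T := by
          ext x
          simp only [Finset.mem_filter, Finset.mem_sdiff]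
          tauto
        have hTsub' : T ⊆ Q.filter (fun i => t' i = v) := by rw [hvc]; exact hTsub
        rw [hset, Finset.card_sdiff_of_subset hTsub', hTcard, hvc]
        exact Nat.dvd_sub (hdiv c) dvd_rfl
      · have hset : (Q \ T).filter (fun i => t' i = v) = Q.filter (fun i => t' i = v) := by
          ext x
          simp only [Finset.mem_filter, Finset.mem_sdiff]
          constructor
          · rintro ⟨⟨hx, _⟩, hv⟩; exact ⟨hx, hv⟩
          · rintro ⟨hx, hv⟩
            refine ⟨⟨hx, fun hxT => ?_⟩, hv⟩
            exact hvc (hv ▸ hTval x hxT)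
        rw [hset]
        exact hdiv v
    obtain ⟨π', hπ'⟩ := ih (Q \ T) hcard' t' hmono' hdiv'
    have hTne : T ≠ ⊥ := by
      rw [Finset.bot_eq_empty, ← Finset.nonempty_iff_ne_empty]
      rw [← Finset.card_pos, hTcard]
      exact hcpos
    have hdisj : Disjoint (Q \ T) T := Finset.sdiff_disjoint
    have hsup : (Q \ T) ⊔ T = Q := by
      rw [Finset.sup_eq_union, Finset.sdiff_union_of_subset hTQ]
    refine ⟨π'.extend hTne hdisj hsup, ?_⟩
    intro B hB i hi
    rw [Finpartition.extend_parts] at hB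
    rcases Finset.mem_insert.1 hB with rfl | hB'
    · rw [hTcard, hTval i hi]
    · exact hπ' B hB' i hi

/-- The multiplicity divisibility condition holds for the size function of any finpartition. -/
private lemma aux_div_of_partition {Q : Finset (Fin n)} (σ : Finpartition Q) (t : Fin n → ℕ)
    (ht : ∀ i ∈ Q, t i = (σ.part i).card) :
    ∀ v : ℕ, v ∣ (Q.filter (fun i => t i = v)).card := by
  intro v
  have hset : Q.filter (fun i => t i = v) =
      (σ.parts.filter (fun B => B.card = v)).biUnion id := by
    ext i
    constructor
    · intro hi
      obtain ⟨hiQ, hv⟩ := Finset.mem_filter.1 hi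
      refine Finset.mem_biUnion.2 ⟨σ.part i, Finset.mem_filter.2 ⟨σ.part_mem.2 hiQ, ?_⟩,
        show i ∈ id (σ.part i) from σ.mem_part hiQ⟩
      rw [← ht i hiQ, hv]
    · intro hi
      obtain ⟨B, hB, hiB⟩ := Finset.mem_biUnion.1 hi
      obtain ⟨hB1, hB2⟩ := Finset.mem_filter.1 hB
      have hiB' : i ∈ B := hiB
      have hiQ : i ∈ Q := σ.le hB1 hiB'
      refine Finset.mem_filter.2 ⟨hiQ, ?_⟩
      rw [ht i hiQ, σ.part_eq_of_mem hB1 hiB', hB2]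
  rw [hset, Finset.card_biUnion]
  · apply Finset.dvd_sum
    intro B hB
    rw [show ((id B : Finset (Fin n))).card = B.card from rfl, (Finset.mem_filter.1 hB).2]
  · intro x hx y hy hxy
    exact σ.disjoint (Finset.mem_coe.2 (Finset.mem_filter.1 hx).1)
      (Finset.mem_coe.2 (Finset.mem_filter.1 hy).1) hxy

/-- Filter cardinalities can be read off the multiset of values. -/
private lemma aux_card_filter_eq_count {Q : Finset (Fin n)} (u : Fin n → ℕ) (v : ℕ) :
    (Q.filter (fun i => u i = v)).card = Multiset.count v (Q.val.map u) := by
  rw [Multiset.count_map]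
  have h2 : Q.val.filter (fun a => v = u a) = Q.val.filter (fun a => u a = v) :=
    Multiset.filter_congr (fun x _ => ⟨fun h => h.symm, fun h => h.symm⟩)
  rw [h2, ← Finset.filter_val]
  rfl

end AuxLemmas

/-- for `n` agents with monotone ideal sizes `s`, a budget `α` of
exclusions, and a monotone cost function fulfilling the quadrangle and reverse
quadrangle inequalities, there is a size-monotonic solution with at most `α`
exclusions whose utilitarian social cost is minimum among all solutions with
at most `α` exclusions. -/
theorem exists_size_monotonic_utilitarian_optimum (n α : ℕ)
    (s : Fin n → ℕ) (hs : Monotone s) (cost : ℕ → ℕ → ℝ)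
    (hmono : ∀ p a b : ℕ, (p ≤ a ∧ a ≤ b) ∨ (b ≤ a ∧ a ≤ p) →
      cost p a ≤ cost p b)
    (hquad : ∀ a b c d : ℕ, a ≤ b → b ≤ c → c ≤ d →
      cost a c + cost b d ≤ cost a d + cost b c)
    (hrquad : ∀ a b c d : ℕ, d ≤ c → c ≤ b → b ≤ a →
      cost a c + cost b d ≤ cost a d + cost b c) :
    ∃ (P : Finset (Fin n)) (π : Finpartition P),
      (Finset.univ \ P).card ≤ α ∧
      (∀ i j : Fin n, i < j → ∀ B ∈ π.parts, i ∈ B →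
        ∀ B' ∈ π.parts, j ∈ B' → B.card ≤ B'.card) ∧
      (∀ (Q : Finset (Fin n)) (σ : Finpartition Q),
        (Finset.univ \ Q).card ≤ α →
          ∑ B ∈ π.parts, ∑ i ∈ B, cost (s i) B.card ≤
            ∑ B ∈ σ.parts, ∑ i ∈ B, cost (s i) B.card) := by
  have hfq := aux_fullquad cost hmono hquad hrquad
  -- the type of solutions is finite and nonempty
  haveI hfin : ∀ Q : Finset (Fin n), Finite (Finpartition Q) := by
    intro Q
    apply Finite.of_injective (fun π : Finpartition Q => π.parts)
    intro a b h
    cases a; cases b; congr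
  have hne : Nonempty {x : Σ Q : Finset (Fin n), Finpartition Q //
      (Finset.univ \ x.1).card ≤ α} := by
    rcases eq_or_ne (Finset.univ : Finset (Fin n)) ∅ with h | h
    · exact ⟨⟨⟨Finset.univ, (Finpartition.empty _).copy (Finset.bot_eq_empty.trans h.symm)⟩,
        by simp⟩⟩
    · exact ⟨⟨⟨Finset.univ, Finpartition.indiscrete (by rwa [Finset.bot_eq_empty])⟩, by simp⟩⟩
  obtain ⟨⟨⟨Q, σ⟩, hQα⟩, hopt⟩ := Finite.exists_min
    (fun x : {x : Σ Q : Finset (Fin n), Finpartition Q // (Finset.univ \ x.1).card ≤ α} =>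
      ∑ B ∈ x.1.2.parts, ∑ i ∈ B, cost (s i) B.card)
  -- the size function of the optimal solution
  set t : Fin n → ℕ := fun i => (σ.part i).card with htdef
  have ht_parts : ∀ B ∈ σ.parts, ∀ i ∈ B, B.card = t i := by
    intro B hB i hi
    rw [htdef]
    simp only
    rw [σ.part_eq_of_mem hB hi]
  -- rearrange into a monotone size function
  obtain ⟨t', hmono', hms', hsum'⟩ := aux_rearrange s hs cost hfq Q.card Q le_rfl t
  -- divisibility transfers along the multiset equality
  have hdiv : ∀ v : ℕ, v ∣ (Q.filter (fun i => t' i = v)).card := by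
    intro v
    rw [aux_card_filter_eq_count, hms', ← aux_card_filter_eq_count]
    exact aux_div_of_partition σ t (fun i _ => rfl) v
  -- chunk into a finpartition realizing t'
  obtain ⟨π, hπ⟩ := aux_chunk Q.card Q le_rfl t' hmono' hdiv
  refine ⟨Q, π, hQα, ?_, ?_⟩
  · -- size-monotonic
    intro i j hij B hB hiB B' hB' hjB'
    rw [hπ B hB i hiB, hπ B' hB' j hjB']
    exact hmono' i (π.le hB hiB) j (π.le hB' hjB') hij.le
  · -- optimality
    intro Q₂ σ₂ hQ₂
    calc ∑ B ∈ π.parts, ∑ i ∈ B, cost (s i) B.card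
        = ∑ i ∈ Q, cost (s i) (t' i) := aux_cost_sum_eq π t' hπ (fun i c => cost (s i) c)
      _ ≤ ∑ i ∈ Q, cost (s i) (t i) := hsum'
      _ = ∑ B ∈ σ.parts, ∑ i ∈ B, cost (s i) B.card :=
          (aux_cost_sum_eq σ t ht_parts (fun i c => cost (s i) c)).symm
      _ ≤ ∑ B ∈ σ₂.parts, ∑ i ∈ B, cost (s i) B.card := hopt ⟨⟨Q₂, σ₂⟩, hQ₂⟩
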